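/- arXiv:1204.6723 — 4 statements merged into one kernel-verified Lean document; each statement's English description precedes it below -/
import Mathlib

section
/- Let K be a loop-free unital free augmented directed complex, let x ∈ νK, let q ≥ 0 and let α be a sign. Then there is no sequence of basis elements e_0, a_1, e_1, a_2, e_2, …, a_k, e_k with k ≥ 1 such that e_0 = e_k, each a_r (1 ≤ r ≤ k) lies in the support of x_{q+1}^α, each e_{r−1} lies in the support of ∂⁻a_r, and each e_r lies in the support of ∂⁺a_r. (In other words, the network G_q^α(x), whose edges are the terms of g_q^α(x), whose vertices are the terms of x_{q+1}^α, and in which an edge e has target a iff e is a term of ∂⁻a and source a iff e is a term of ∂⁺a, is acyclic.) -/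
open Finsupp

/-- A free augmented directed complex, encoded by its distinguished graded basis:
`B` is the set of basis elements, `dim` the dimension function, `bd a` the boundary
chain of a basis element `a`, and `eps` the augmentation (supported in dimension 0). -/
structure FADC where
  B : Type
  dim : B → ℕ
  bd : B → (B →₀ ℤ)
  eps : B → ℤ
  bd_dim : ∀ a b, b ∈ (bd a).support → dim b + 1 = dim a
  eps_dim : ∀ b, 0 < dim b → eps b = 0
  bd_bd : ∀ a : B, ((bd a).sum fun b n => n • bd b) = 0
  eps_bd : ∀ a : B, ((bd a).sum fun b n => n * eps b) = 0

namespace FADC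

variable (K : FADC)

/-- The boundary homomorphism `∂`, extended to chains. -/
noncomputable def bdc (c : K.B →₀ ℤ) : K.B →₀ ℤ := c.sum fun b n => n • K.bd b

/-- The augmentation `ε`, extended to chains. -/
noncomputable def epsc (c : K.B →₀ ℤ) : ℤ := c.sum fun b n => n * K.eps b

/-- `∂⁺c`, the positive part of `∂c`. -/
noncomputable def bdp (c : K.B →₀ ℤ) : K.B →₀ ℤ := (K.bdc c).mapRange (fun n => max n 0) (by simp)

/-- `∂⁻c`, the negative part of `∂c`. -/
noncomputable def bdm (c : K.B →₀ ℤ) : K.B →₀ ℤ := (-K.bdc c).mapRange (fun n => max n 0) (by simp)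

/-- `K` is unital if `ε((∂⁻)^q a) = ε((∂⁺)^q a) = 1` for every `q`-dimensional
basis element `a`. -/
def Unital : Prop := ∀ a : K.B,
  K.epsc (K.bdm^[K.dim a] (Finsupp.single a 1)) = 1 ∧
  K.epsc (K.bdp^[K.dim a] (Finsupp.single a 1)) = 1

/-- `K` is loop-free if its basis elements admit a (strict) partial order such that
for every basis element `a` and every `r > 0`, the basis elements occurring in
`(∂⁻)^r a` strictly precede those occurring in `(∂⁺)^r a`. -/
def LoopFree : Prop :=
  ∃ lt : K.B → K.B → Prop, IsStrictOrder K.B lt ∧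
    ∀ (a : K.B) (r : ℕ), 0 < r →
      ∀ b ∈ (K.bdm^[r] (Finsupp.single a 1)).support,
        ∀ b' ∈ (K.bdp^[r] (Finsupp.single a 1)).support, lt b b'

/-- `K` is atomic of dimension `n`. -/
def Atomic (n : ℕ) : Prop :=
  (∀ b : K.B, K.dim b ≤ n) ∧
  (∃! g : K.B, K.dim g = n) ∧
  (∀ b : K.B, K.dim b < n → ∃ a : K.B, K.dim b < K.dim a ∧
    (b ∈ (K.bdm (Finsupp.single a 1)).support ∨ b ∈ (K.bdp (Finsupp.single a 1)).support))

/-- `g_q^α(x)`: given `x_q^- = xq` and `x_{q+1}^α = c`, this is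
`x_q^- + ∂⁺a_1 + … + ∂⁺a_k` where `a_1, …, a_k` are the terms of `c`. -/
noncomputable def gch (xq c : K.B →₀ ℤ) : K.B →₀ ℤ :=
  xq + c.sum fun b n => n • K.bdp (Finsupp.single b 1)

/-- The negative chains `⟨K⟩_q^- = (∂⁻)^{n-q} g` of the canonical atom. -/
noncomputable def atomNeg (g : K.B) (n q : ℕ) : K.B →₀ ℤ :=
  if q ≤ n then K.bdm^[n - q] (Finsupp.single g 1) else 0

/-- The positive chains `⟨K⟩_q^+ = (∂⁺)^{n-q} g` of the canonical atom. -/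
noncomputable def atomPos (g : K.B) (n q : ℕ) : K.B →₀ ℤ :=
  if q ≤ n then K.bdp^[n - q] (Finsupp.single g 1) else 0

end FADC

/-- Membership in `νK`: the double sequence `(x_0^-, x_0^+ | x_1^-, x_1^+ | …)`,
given by `xm` and `xp`, is a member of `νK`. -/
structure NuMem (K : FADC) (xm xp : ℕ → (K.B →₀ ℤ)) : Prop where
  dim_m : ∀ q, ∀ b ∈ (xm q).support, K.dim b = q
  dim_p : ∀ q, ∀ b ∈ (xp q).support, K.dim b = q
  nonneg_m : ∀ q b, 0 ≤ xm q b
  nonneg_p : ∀ q b, 0 ≤ xp q b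
  fin : ∃ n, ∀ q, n < q → xm q = 0 ∧ xp q = 0
  eps_m : K.epsc (xm 0) = 1
  eps_p : K.epsc (xp 0) = 1
  bd_m : ∀ q, K.bdc (xm (q + 1)) = xp q - xm q
  bd_p : ∀ q, K.bdc (xp (q + 1)) = xp q - xm q

/-- `K` together with the class `thin` of thin basis elements is an
`n`-dimensional opetopic directed complex. -/
structure IsODC (K : FADC) (thin : K.B → Prop) (n : ℕ) : Prop where
  atomic : K.Atomic n
  loopFree : K.LoopFree
  unital : K.Unital
  thin_pos : ∀ b, thin b → 0 < K.dim b
  bdp_basis : ∀ b : K.B, 0 < K.dim b →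
    ∃ a : K.B, ¬ thin a ∧ K.bdp (Finsupp.single b 1) = Finsupp.single a 1
  bdm_thin : ∀ b : K.B, thin b →
    ∃ a : K.B, ¬ thin a ∧ K.bdm (Finsupp.single b 1) = Finsupp.single a 1

/-- An opetopic directed complex is reduced if every thin basis element is `∂⁻a`
for some other basis element `a`. -/
def ODCReduced (K : FADC) (thin : K.B → Prop) : Prop :=
  ∀ b, thin b → ∃ a, a ≠ b ∧ K.bdm (Finsupp.single a 1) = Finsupp.single b 1

/-- A network: finite sets of edges and vertices with partially defined source and
target functions; input edges are those with no source, output edges those with no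
target. -/
structure Network where
  E : Type
  V : Type
  finE : Finite E
  finV : Finite V
  src : E → Option V
  tgt : E → Option V

namespace Network

variable (N : Network)

/-- One step of a path: the target of `e` is the source of `e'`. -/
def step (e e' : N.E) : Prop := ∃ v : N.V, N.tgt e = some v ∧ N.src e' = some v

/-- There is a path from `e` to `e'`. -/
def PathTo (e e' : N.E) : Prop := Relation.ReflTransGen N.step e e'

/-- A network is acyclic if there is no nontrivial path from an edge to itself. -/
def Acyclic : Prop := ∀ e : N.E, ¬ Relation.TransGen N.step e e

/-- A network is linear if it is acyclic and consists of a single path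
`e_0, v_1, e_1, …, v_k, e_k`. -/
def Linear : Prop := N.Acyclic ∧
  ∃ (k : ℕ) (e : Fin (k + 1) ≃ N.E) (v : Fin k ≃ N.V),
    N.src (e 0) = none ∧ N.tgt (e (Fin.last k)) = none ∧
    ∀ i : Fin k, N.tgt (e i.castSucc) = some (v i) ∧ N.src (e i.succ) = some (v i)

/-- A network is confluent if it is acyclic, has a unique output edge, and every
vertex is the source of exactly one edge and the target of at least one edge. -/
def Confluent : Prop := N.Acyclic ∧ (∃! e : N.E, N.tgt e = none) ∧
  (∀ v : N.V, ∃! e : N.E, N.src e = some v) ∧ (∀ v : N.V, ∃ e : N.E, N.tgt e = some v)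

end Network

/-- An opetopic network: an acyclic network with a unique output edge, together with
thin edges (which are inputs) and thin vertices (each the target of exactly one edge,
which is not thin). -/
structure OpetopicNetwork extends Network where
  thinE : E → Prop
  thinV : V → Prop
  acyclic : toNetwork.Acyclic
  out_unique : ∃! e : E, tgt e = none
  thinE_input : ∀ e, thinE e → src e = none
  thinV_unique : ∀ v, thinV v → ∃! e, tgt e = some v
  thinV_nonthin : ∀ v e, thinV v → tgt e = some v → ¬ thinE e

/-- An opetopic network is reduced if every thin edge has a target vertex which is
the target of no other edge. -/
def OpetopicNetwork.Reduced (N : OpetopicNetwork) : Prop :=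
  ∀ e, N.thinE e → ∃ v, N.tgt e = some v ∧ ∀ e', N.tgt e' = some v → e' = e

/-- `c` is a constellation from `N` to `P`: a bijection from the vertices of `N` to
the input edges of `P`, preserving thinness, such that for every edge `e` of `P`
there is exactly one edge of `N` with a source but not a target in the preimage of
`I_e` (the input edges of `P` from which there is a path to `e`). -/
def IsConstellation (N P : OpetopicNetwork) (c : N.V → P.E) : Prop :=
  (∀ v, P.src (c v) = none) ∧
  Function.Injective c ∧
  (∀ e : P.E, P.src e = none → ∃ v, c v = e) ∧
  (∀ v, N.thinV v ↔ P.thinE (c v)) ∧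
  (∀ e : P.E, ∃! e' : N.E,
    (∃ v, N.src e' = some v ∧ P.toNetwork.PathTo (c v) e) ∧
    ¬ (∃ v, N.tgt e' = some v ∧ P.toNetwork.PathTo (c v) e))

/-- An `n`-dimensional opetopic sequence `N_0 → N_1 → … → N_n`. -/
structure OpetopicSequence (n : ℕ) where
  N : Fin (n + 1) → OpetopicNetwork
  c : ∀ q : Fin n, (N q.castSucc).V → (N q.succ).E
  constell : ∀ q : Fin n, IsConstellation (N q.castSucc) (N q.succ) (c q)
  linear0 : (N 0).toNetwork.Linear
  noThin0 : ∀ e, ¬ (N 0).thinE e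
  top_single : ∃! _e : (N (Fin.last n)).E, True
  top_noV : IsEmpty (N (Fin.last n)).V

/-- An isomorphism of opetopic sequences: families of bijections on edges and
vertices preserving sources, targets, thin edges and thin vertices, and commuting
with the constellations. -/
def SeqIso (n : ℕ) (S S' : OpetopicSequence n) : Prop :=
  ∃ (fE : ∀ q : Fin (n + 1), (S.N q).E ≃ (S'.N q).E)
    (fV : ∀ q : Fin (n + 1), (S.N q).V ≃ (S'.N q).V),
    (∀ q : Fin (n + 1),
      (∀ e v, (S.N q).src e = some v ↔ (S'.N q).src (fE q e) = some (fV q v)) ∧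
      (∀ e v, (S.N q).tgt e = some v ↔ (S'.N q).tgt (fE q e) = some (fV q v)) ∧
      (∀ e, (S.N q).thinE e ↔ (S'.N q).thinE (fE q e)) ∧
      (∀ v, (S.N q).thinV v ↔ (S'.N q).thinV (fV q v))) ∧
    (∀ q : Fin n, ∀ v, fE q.succ (S.c q v) = S'.c q (fV q.castSucc v))

/-- The opetopic sequence `S` realizes the sequence
`G_0^-(⟨K⟩) → … → G_n^-(⟨K⟩)` associated to the opetopic directed complex `K`
(with top basis element `g` and thin elements `thin`): the edges of `S.N q`
correspond bijectively to the terms of `g_q^-(⟨K⟩)`, the vertices to the terms of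
`⟨K⟩_{q+1}^-`, sources, targets and thinness are as prescribed by `∂⁺`, `∂⁻` and
`thin`, and the constellations are the identity correspondences. -/
def RealizedBy (K : FADC) (thin : K.B → Prop) (n : ℕ) (g : K.B)
    (S : OpetopicSequence n) : Prop :=
  ∃ (eE : ∀ q : Fin (n + 1), (S.N q).E → K.B)
    (eV : ∀ q : Fin (n + 1), (S.N q).V → K.B),
    (∀ q : Fin (n + 1),
      Function.Injective (eE q) ∧
      (∀ ed, eE q ed ∈ (K.gch (K.atomNeg g n q.1) (K.atomNeg g n (q.1 + 1))).support) ∧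
      (∀ b ∈ (K.gch (K.atomNeg g n q.1) (K.atomNeg g n (q.1 + 1))).support,
        ∃ ed, eE q ed = b) ∧
      Function.Injective (eV q) ∧
      (∀ v, eV q v ∈ (K.atomNeg g n (q.1 + 1)).support) ∧
      (∀ b ∈ (K.atomNeg g n (q.1 + 1)).support, ∃ v, eV q v = b) ∧
      (∀ ed v, (S.N q).src ed = some v ↔
        eE q ed ∈ (K.bdp (Finsupp.single (eV q v) 1)).support) ∧
      (∀ ed v, (S.N q).tgt ed = some v ↔
        eE q ed ∈ (K.bdm (Finsupp.single (eV q v) 1)).support) ∧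
      (∀ ed, (S.N q).thinE ed ↔ thin (eE q ed)) ∧
      (∀ v, (S.N q).thinV v ↔ thin (eV q v))) ∧
    (∀ q : Fin n, ∀ v, eE q.succ (S.c q v) = eV q.castSucc v)

/-- A bundled `n`-dimensional opetopic directed complex. -/
structure ODCBundle (n : ℕ) where
  K : FADC
  thin : K.B → Prop
  g : K.B
  dim_g : K.dim g = n
  isODC : IsODC K thin n

/-- Isomorphism of (bundled) opetopic directed complexes: a dimension- and
thinness-preserving bijection of bases commuting with boundaries and augmentations. -/
def ODCIso {n : ℕ} (A A' : ODCBundle n) : Prop :=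
  ∃ φ : A.K.B ≃ A'.K.B,
    (∀ b, A'.K.dim (φ b) = A.K.dim b) ∧
    (∀ b, A'.thin (φ b) ↔ A.thin b) ∧
    (∀ b, A'.K.bd (φ b) = Finsupp.equivMapDomain φ (A.K.bd b)) ∧
    (∀ b, A'.K.eps (φ b) = A.K.eps b)

/-- The network `G_q^α(x)` is acyclic: there is no cyclic sequence
`e_0, a_1, e_1, …, a_k, e_k` with `k ≥ 1`, `e_0 = e_k`, each `a_r` a term of
`x_{q+1}^α`, each `e_{r-1}` a term of `∂⁻a_r` and each `e_r` a term of `∂⁺a_r`. -/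
theorem stmt10 (K : FADC) (hLF : K.LoopFree) (hU : K.Unital)
    (xm xp : ℕ → (K.B →₀ ℤ)) (hx : NuMem K xm xp) (q : ℕ)
    (xa : ℕ → K.B →₀ ℤ) (hxa : xa = xm ∨ xa = xp) :
    ¬ ∃ (k : ℕ) (e : ℕ → K.B) (a : ℕ → K.B), 1 ≤ k ∧ e 0 = e k ∧
      ∀ r, 1 ≤ r → r ≤ k →
        a r ∈ (xa (q + 1)).support ∧
        e (r - 1) ∈ (K.bdm (Finsupp.single (a r) 1)).support ∧
        e r ∈ (K.bdp (Finsupp.single (a r) 1)).support := by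
  rintro ⟨k, e, a, hk, hek, hr⟩
  obtain ⟨lt, hso, hlt⟩ := hLF
  have key : ∀ r, 1 ≤ r → r ≤ k → lt (e (r - 1)) (e r) := by
    intro r h1 h2
    obtain ⟨_, hm, hp⟩ := hr r h1 h2
    exact hlt (a r) 1 one_pos (e (r - 1))
      (by simpa [Function.iterate_one] using hm) (e r)
      (by simpa [Function.iterate_one] using hp)
  have chain : ∀ r, r ≤ k → 1 ≤ r → lt (e 0) (e r) := by
    intro r
    induction r with
    | zero => omega
    | succ n ih =>
      intro hle _
      rcases Nat.eq_zero_or_pos n with h0 | hn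
      · subst h0; simpa using key 1 le_rfl hle
      · exact hso.toIsTrans.trans _ _ _ (ih (by omega) hn)
          (by simpa using key (n + 1) (by omega) hle)
  exact hso.toIrrefl.irrefl _ (hek ▸ chain k le_rfl hk)
end

section
/- Let K be a loop-free unital free augmented directed complex, let x ∈ νK and let α be a sign. Then x_1^α is a sum of distinct 1-dimensional basis elements which can be enumerated as a_1, …, a_k in such a way that ∂⁻a_1 = x_0^−, ∂⁺a_i = ∂⁻a_{i+1} for 1 ≤ i < k, and ∂⁺a_k = x_0^+ (each ∂⁻a_i and ∂⁺a_i being a single basis element), and the k+1 basis elements x_0^−, ∂⁺a_1, …, ∂⁺a_k are pairwise distinct and are exactly the terms of g_0^α(x). (In other words, the network G_0^α(x) is linear.) -/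
open Finsupp

section Aux11

open Finsupp

private lemma aux_bdc_single (K : FADC) (a : K.B) : K.bdc (Finsupp.single a 1) = K.bd a := by
  rw [FADC.bdc, Finsupp.sum_single_index (by simp), one_smul]

private lemma aux_epsc_single (K : FADC) (b : K.B) (m : ℤ) :
    K.epsc (Finsupp.single b m) = m * K.eps b := by
  rw [FADC.epsc, Finsupp.sum_single_index (by simp)]

private lemma aux_bdp_apply (K : FADC) (c : K.B →₀ ℤ) (b : K.B) :
    K.bdp c b = max (K.bdc c b) 0 := by
  rw [FADC.bdp, Finsupp.mapRange_apply]

private lemma aux_bdm_apply (K : FADC) (c : K.B →₀ ℤ) (b : K.B) :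
    K.bdm c b = max (-(K.bdc c b)) 0 := by
  rw [FADC.bdm, Finsupp.mapRange_apply, Finsupp.neg_apply]

private lemma aux_bd_eq (K : FADC) (b : K.B) :
    K.bd b = K.bdp (Finsupp.single b 1) - K.bdm (Finsupp.single b 1) := by
  ext u
  rw [Finsupp.sub_apply, aux_bdp_apply, aux_bdm_apply, aux_bdc_single]
  omega

private lemma aux_bdm_nonneg (K : FADC) (c : K.B →₀ ℤ) (b : K.B) : 0 ≤ K.bdm c b := by
  rw [aux_bdm_apply]; exact le_max_right _ _

private lemma aux_bdp_nonneg (K : FADC) (c : K.B →₀ ℤ) (b : K.B) : 0 ≤ K.bdp c b := by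
  rw [aux_bdp_apply]; exact le_max_right _ _

private lemma aux_support_bdm (K : FADC) (c : K.B →₀ ℤ) :
    (K.bdm c).support ⊆ (K.bdc c).support := by
  intro b hb
  rw [Finsupp.mem_support_iff] at hb ⊢
  rw [aux_bdm_apply] at hb
  omega

private lemma aux_support_bdp (K : FADC) (c : K.B →₀ ℤ) :
    (K.bdp c).support ⊆ (K.bdc c).support := by
  intro b hb
  rw [Finsupp.mem_support_iff] at hb ⊢
  rw [aux_bdp_apply] at hb
  omega

private lemma aux_eps_one (K : FADC) (hU : K.Unital) (b : K.B) (hb : K.dim b = 0) :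
    K.eps b = 1 := by
  have h := (hU b).1
  rw [hb, Function.iterate_zero, id_eq, aux_epsc_single, one_mul] at h
  exact h

private lemma aux_weight_zero (K : FADC) (c : K.B →₀ ℤ) (h0 : ∀ b, 0 ≤ c b)
    (h : (c.sum fun _ n => n) = 0) : c = 0 := by
  ext b
  have h2 : (∑ b ∈ c.support, c b) = 0 := h
  have hall := (Finset.sum_eq_zero_iff_of_nonneg (fun i _ => h0 i)).mp h2
  by_cases hb : b ∈ c.support
  · simpa using hall b hb
  · simpa using Finsupp.notMem_support_iff.mp hb

private lemma aux_weight_one (K : FADC) (c : K.B →₀ ℤ) (h0 : ∀ b, 0 ≤ c b)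
    (h : (c.sum fun _ n => n) = 1) : ∃ s, c = Finsupp.single s 1 := by
  classical
  have h2 : (∑ b ∈ c.support, c b) = 1 := h
  have hne : c.support.Nonempty := by
    rcases Finset.eq_empty_or_nonempty c.support with he | hne
    · rw [he] at h2; simp at h2
    · exact hne
  obtain ⟨s, hs⟩ := hne
  have hs1 : 1 ≤ c s := by
    have h3 := Finsupp.mem_support_iff.mp hs
    have h4 := h0 s
    omega
  have hsplit : c s + ∑ b ∈ c.support.erase s, c b = ∑ b ∈ c.support, c b :=
    Finset.add_sum_erase c.support (fun b => c b) hs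
  have hrest0 : ∀ b ∈ c.support.erase s, (0:ℤ) ≤ c b := fun b _ => h0 b
  have hrestnn : 0 ≤ ∑ b ∈ c.support.erase s, c b := Finset.sum_nonneg hrest0
  have hrest : (∑ b ∈ c.support.erase s, c b) = 0 := by omega
  have hall := (Finset.sum_eq_zero_iff_of_nonneg hrest0).mp hrest
  have hsupp : c.support = {s} := by
    apply Finset.eq_singleton_iff_unique_mem.mpr
    refine ⟨hs, fun b hb => ?_⟩
    by_contra hbs
    have hb' : b ∈ c.support.erase s := Finset.mem_erase.mpr ⟨hbs, hb⟩
    exact Finsupp.mem_support_iff.mp hb (hall b hb')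
  have hcs : c s = 1 := by omega
  obtain ⟨_, hc⟩ := Finsupp.support_eq_singleton.mp hsupp
  rw [hcs] at hc
  exact ⟨s, hc⟩

private lemma aux_chain_single (K : FADC) (hU : K.Unital) (c : K.B →₀ ℤ)
    (h0 : ∀ b, 0 ≤ c b) (hd : ∀ b ∈ c.support, K.dim b = 0) (he : K.epsc c = 1) :
    ∃ s, c = Finsupp.single s 1 := by
  apply aux_weight_one K c h0
  rw [FADC.epsc, Finsupp.sum] at he
  rw [Finsupp.sum, ← he]
  apply Finset.sum_congr rfl
  intro b hb
  rw [aux_eps_one K hU b (hd b hb), mul_one]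

private lemma aux_bdm_single (K : FADC) (hU : K.Unital) (a : K.B) (ha : K.dim a = 1) :
    ∃ s, K.bdm (Finsupp.single a 1) = Finsupp.single s 1 := by
  apply aux_chain_single K hU _ (fun b => aux_bdm_nonneg K _ b)
  · intro b hb
    have hb' : b ∈ (K.bd a).support := by
      have h := aux_support_bdm K (Finsupp.single a 1) hb
      rwa [aux_bdc_single] at h
    have := K.bd_dim a b hb'
    omega
  · have h := (hU a).1
    rwa [ha, Function.iterate_one] at h

private lemma aux_bdp_single (K : FADC) (hU : K.Unital) (a : K.B) (ha : K.dim a = 1) :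
    ∃ s, K.bdp (Finsupp.single a 1) = Finsupp.single s 1 := by
  apply aux_chain_single K hU _ (fun b => aux_bdp_nonneg K _ b)
  · intro b hb
    have hb' : b ∈ (K.bd a).support := by
      have h := aux_support_bdp K (Finsupp.single a 1) hb
      rwa [aux_bdc_single] at h
    have := K.bd_dim a b hb'
    omega
  · have h := (hU a).2
    rwa [ha, Function.iterate_one] at h

private lemma aux_min {α : Type} (lt : α → α → Prop)
    (htr : ∀ x y z, lt x y → lt y z → lt x z) (hirr : ∀ x, ¬ lt x x)
    (s : Finset α) : s.Nonempty → ∃ m ∈ s, ∀ x ∈ s, ¬ lt x m := by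
  classical
  induction s using Finset.induction with
  | empty => intro h; simp at h
  | @insert a s ha ih =>
    intro _
    rcases Finset.eq_empty_or_nonempty s with rfl | hs'
    · exact ⟨a, by simp, by simpa using hirr a⟩
    · obtain ⟨m, hm, hmin⟩ := ih hs'
      by_cases hlt : lt a m
      · refine ⟨a, Finset.mem_insert_self a s, ?_⟩
        intro x hx
        rcases Finset.mem_insert.mp hx with rfl | hx'
        · exact hirr x
        · intro hxa
          exact hmin x hx' (htr x a m hxa hlt)
      · refine ⟨m, Finset.mem_insert_of_mem hm, ?_⟩
        intro x hx
        rcases Finset.mem_insert.mp hx with rfl | hx'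
        · exact hlt
        · exact hmin x hx'

private lemma aux_sum_sum (K : FADC) (F : K.B → (K.B →₀ ℤ)) (a : ℕ → K.B) (s : Finset ℕ) :
    ((∑ i ∈ s, Finsupp.single (a i) (1:ℤ)).sum fun b m => m • F b) = ∑ i ∈ s, F (a i) := by
  classical
  induction s using Finset.induction with
  | empty => simp
  | @insert i s hi ih =>
    rw [Finset.sum_insert hi, Finset.sum_insert hi,
      Finsupp.sum_add_index' (fun b => zero_smul ℤ (F b)) (fun b m n => add_smul m n (F b)),
      ih, Finsupp.sum_single_index (zero_smul ℤ (F (a i))), one_smul]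

private lemma aux_path (K : FADC) (lt : K.B → K.B → Prop)
    (htr : ∀ x y z, lt x y → lt y z → lt x z) (hirr : ∀ x, ¬ lt x x)
    (src tgt : K.B → K.B)
    (hsrc : ∀ a, K.dim a = 1 → K.bdm (Finsupp.single a 1) = Finsupp.single (src a) 1)
    (htgt : ∀ a, K.dim a = 1 → K.bdp (Finsupp.single a 1) = Finsupp.single (tgt a) 1)
    (hstep : ∀ a, K.dim a = 1 → lt (src a) (tgt a)) :
    ∀ (k : ℕ) (c : K.B →₀ ℤ), (∀ b, 0 ≤ c b) → (∀ b ∈ c.support, K.dim b = 1) →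
    (c.sum fun _ n => n) = (k : ℤ) → ∀ s t : K.B,
    K.bdc c = Finsupp.single t 1 - Finsupp.single s 1 →
    ∃ (a v : ℕ → K.B), v 0 = s ∧ v k = t ∧
      (∀ i, 1 ≤ i → i ≤ k → K.dim (a i) = 1 ∧ src (a i) = v (i - 1) ∧ tgt (a i) = v i) ∧
      (∀ i, i + 1 ≤ k → lt (v i) (v (i + 1))) ∧
      c = ∑ i ∈ Finset.Icc 1 k, Finsupp.single (a i) 1 := by
  classical
  have hbdb : ∀ b, K.dim b = 1 →
      K.bd b = Finsupp.single (tgt b) 1 - Finsupp.single (src b) 1 := by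
    intro b hb
    rw [aux_bd_eq, hsrc b hb, htgt b hb]
  have heval : ∀ (d : K.B →₀ ℤ), (∀ b ∈ d.support, K.dim b = 1) → ∀ u, K.bdc d u =
      ∑ b ∈ d.support, d b * ((if tgt b = u then (1:ℤ) else 0) - (if src b = u then 1 else 0)) := by
    intro d hdim u
    rw [FADC.bdc, Finsupp.sum_apply, Finsupp.sum]
    apply Finset.sum_congr rfl
    intro b hb
    rw [Finsupp.smul_apply, hbdb b (hdim b hb), Finsupp.sub_apply,
      Finsupp.single_apply, Finsupp.single_apply, smul_eq_mul]
  intro k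
  induction k with
  | zero =>
    intro c h0 hdim hw s t hbd
    have hc0 : c = 0 := aux_weight_zero K c h0 (by exact_mod_cast hw)
    have hst : Finsupp.single t (1:ℤ) = Finsupp.single s 1 := by
      rw [hc0] at hbd
      have hz : K.bdc 0 = 0 := by rw [FADC.bdc, Finsupp.sum_zero_index]
      rw [hz] at hbd
      exact sub_eq_zero.mp hbd.symm
    have hts : t = s := (Finsupp.single_left_inj one_ne_zero).mp hst
    refine ⟨fun _ => s, fun _ => s, rfl, hts.symm, ?_, ?_, ?_⟩
    · intro i h1 h2; omega
    · intro i h; omega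
    · rw [hc0]; simp
  | succ k ih =>
    intro c h0 hdim hw s t hbd
    have hne : c.support.Nonempty := by
      rcases Finset.eq_empty_or_nonempty c.support with he | h
      · exfalso
        have hc0 : c = 0 := Finsupp.support_eq_empty.mp he
        rw [hc0, Finsupp.sum_zero_index] at hw
        omega
      · exact h
    have hpos : ∀ b ∈ c.support, 1 ≤ c b := by
      intro b hb
      have h1 := Finsupp.mem_support_iff.mp hb
      have h2 := h0 b
      omega
    have hst : s ≠ t := by
      rintro rfl
      have hzero : K.bdc c = 0 := by rw [hbd, sub_self]
      obtain ⟨u, hu, hmin⟩ := aux_min lt htr hirr (c.support.image src) (hne.image src)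
      obtain ⟨a0, ha0, ha0u⟩ := Finset.mem_image.mp hu
      have htne : ∀ b ∈ c.support, tgt b ≠ u := by
        intro b hb h
        exact hmin (src b) (Finset.mem_image_of_mem src hb) (h ▸ hstep b (hdim b hb))
      have hlt : (∑ b ∈ c.support, c b *
          ((if tgt b = u then (1:ℤ) else 0) - (if src b = u then 1 else 0)))
          < ∑ b ∈ c.support, (0:ℤ) := by
        apply Finset.sum_lt_sum
        · intro b hb
          rw [if_neg (htne b hb)]
          have hb1 := hpos b hb
          by_cases hsb : src b = u
          · rw [if_pos hsb]; nlinarith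
          · rw [if_neg hsb]; simp
        · refine ⟨a0, ha0, ?_⟩
          rw [if_neg (htne a0 ha0), if_pos ha0u]
          have ha1 := hpos a0 ha0
          nlinarith
      rw [← heval c hdim u, hzero] at hlt
      simp at hlt
    have hcoef : K.bdc c t = 1 := by
      rw [hbd, Finsupp.sub_apply, Finsupp.single_eq_same, Finsupp.single_eq_of_ne' hst]
      ring
    have hex : ∃ a1 ∈ c.support, tgt a1 = t := by
      by_contra hno
      push_neg at hno
      have hle : K.bdc c t ≤ 0 := by
        rw [heval c hdim t]
        apply Finset.sum_nonpos
        intro b hb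
        rw [if_neg (hno b hb)]
        have hb1 := hpos b hb
        by_cases hsb : src b = t
        · rw [if_pos hsb]; nlinarith
        · rw [if_neg hsb]; simp
      omega
    obtain ⟨a1, ha1, ha1t⟩ := hex
    have hda1 : K.dim a1 = 1 := hdim a1 ha1
    set c' := c - Finsupp.single a1 1 with hc'
    have hc'app : ∀ b, c' b = c b - (if a1 = b then 1 else 0) := by
      intro b; rw [hc', Finsupp.sub_apply, Finsupp.single_apply]
    have h0' : ∀ b, 0 ≤ c' b := by
      intro b
      rw [hc'app]
      by_cases hb : a1 = b
      · rw [if_pos hb, ← hb]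
        have := hpos a1 ha1
        omega
      · rw [if_neg hb]
        have := h0 b
        omega
    have hsupp' : ∀ b ∈ c'.support, K.dim b = 1 := by
      intro b hb
      have hb' := Finsupp.mem_support_iff.mp hb
      rw [hc'app] at hb'
      by_cases hab : a1 = b
      · rw [← hab]; exact hda1
      · apply hdim
        rw [Finsupp.mem_support_iff]
        rw [if_neg hab] at hb'
        omega
    have hw' : (c'.sum fun _ n => n) = (k : ℤ) := by
      rw [hc', Finsupp.sum_sub_index (fun a b1 b2 => rfl),
        Finsupp.sum_single_index rfl]
      omega
    have hbdsub : K.bdc c' = K.bdc c - K.bd a1 := by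
      rw [hc', FADC.bdc, Finsupp.sum_sub_index (fun a b1 b2 => sub_smul b1 b2 (K.bd a)),
        Finsupp.sum_single_index (zero_smul ℤ (K.bd a1)), one_smul]
      rfl
    have hbd' : K.bdc c' = Finsupp.single (src a1) 1 - Finsupp.single s 1 := by
      rw [hbdsub, hbd, hbdb a1 hda1, ha1t]
      abel
    obtain ⟨a', v', hv0, hvk, hav, hadj, hdec⟩ := ih c' h0' hsupp' hw' s (src a1) hbd'
    let a : ℕ → K.B := fun i => if i = k + 1 then a1 else a' i
    let v : ℕ → K.B := fun i => if i = k + 1 then t else v' i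
    have haEq : ∀ i, i ≤ k → a i = a' i := fun i h => if_neg (by omega)
    have haTop : a (k + 1) = a1 := if_pos rfl
    have hvEq : ∀ i, i ≤ k → v i = v' i := fun i h => if_neg (by omega)
    have hvTop : v (k + 1) = t := if_pos rfl
    refine ⟨a, v, ?_, hvTop, ?_, ?_, ?_⟩
    · rw [hvEq 0 (by omega)]; exact hv0
    · intro i h1 h2
      by_cases hik : i = k + 1
      · subst hik
        rw [haTop]
        refine ⟨hda1, ?_, ?_⟩
        · have hkk : k + 1 - 1 = k := by omega
          rw [hkk, hvEq k (by omega)]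
          exact hvk.symm
        · rw [hvTop]; exact ha1t
      · have h2' : i ≤ k := by omega
        obtain ⟨hd, hs', ht'⟩ := hav i h1 h2'
        rw [haEq i h2', hvEq i h2', hvEq (i-1) (by omega)]
        exact ⟨hd, hs', ht'⟩
    · intro i hik
      by_cases h : i + 1 = k + 1
      · have hi : i = k := by omega
        subst hi
        rw [hvEq i (by omega), h, hvTop, hvk, ← ha1t]
        exact hstep a1 hda1
      · have h1 : i + 1 ≤ k := by omega
        rw [hvEq i (by omega), hvEq (i+1) h1]
        exact hadj i h1
    · rw [Finset.sum_Icc_succ_top (by omega : 1 ≤ k + 1), haTop]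
      have hsame : (∑ i ∈ Finset.Icc 1 k, Finsupp.single (a i) (1:ℤ))
          = ∑ i ∈ Finset.Icc 1 k, Finsupp.single (a' i) 1 := by
        apply Finset.sum_congr rfl
        intro i hi
        rw [haEq i (Finset.mem_Icc.mp hi).2]
      rw [hsame, ← hdec, hc']
      exact (sub_add_cancel c (Finsupp.single a1 1)).symm

end Aux11

/-- The network `G_0^α(x)` is linear: `x_1^α` is a sum of distinct `1`-dimensional
basis elements `a_1, …, a_k` with `∂⁻a_1 = x_0^-`, `∂⁺a_i = ∂⁻a_{i+1}` and
`∂⁺a_k = x_0^+`, each `∂⁻a_i` and `∂⁺a_i` being a single basis element, and the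
`k+1` basis chains `x_0^-, ∂⁺a_1, …, ∂⁺a_k` are pairwise distinct and are exactly
the terms of `g_0^α(x)`. -/
theorem stmt11 (K : FADC) (hLF : K.LoopFree) (hU : K.Unital)
    (xm xp : ℕ → (K.B →₀ ℤ)) (hx : NuMem K xm xp)
    (xa : ℕ → K.B →₀ ℤ) (hxa : xa = xm ∨ xa = xp) :
    ∃ (k : ℕ) (a : ℕ → K.B),
      (∀ i, 1 ≤ i → i ≤ k → K.dim (a i) = 1) ∧
      (∀ i j, 1 ≤ i → i ≤ k → 1 ≤ j → j ≤ k → a i = a j → i = j) ∧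
      xa 1 = ∑ i ∈ Finset.Icc 1 k, Finsupp.single (a i) 1 ∧
      (∀ i, 1 ≤ i → i ≤ k →
        (∃ b : K.B, K.bdm (Finsupp.single (a i) 1) = Finsupp.single b 1) ∧
        (∃ b : K.B, K.bdp (Finsupp.single (a i) 1) = Finsupp.single b 1)) ∧
      (1 ≤ k → K.bdm (Finsupp.single (a 1) 1) = xm 0) ∧
      (∀ i, 1 ≤ i → i < k →
        K.bdp (Finsupp.single (a i) 1) = K.bdm (Finsupp.single (a (i + 1)) 1)) ∧
      (1 ≤ k → K.bdp (Finsupp.single (a k) 1) = xp 0) ∧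
      ∃ E : ℕ → (K.B →₀ ℤ),
        E 0 = xm 0 ∧
        (∀ i, 1 ≤ i → i ≤ k → E i = K.bdp (Finsupp.single (a i) 1)) ∧
        (∀ i j, i ≤ k → j ≤ k → E i = E j → i = j) ∧
        K.gch (xm 0) (xa 1) = ∑ i ∈ Finset.range (k + 1), E i := by
  classical
  obtain ⟨lt, hso, hlf⟩ := hLF
  have hirr : ∀ x, ¬ lt x x := fun x => by haveI := hso; exact irrefl x
  have htr : ∀ x y z, lt x y → lt y z → lt x z := fun x y z hxy hyz => by haveI := hso; exact _root_.trans hxy hyz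
  choose! src hsrc using aux_bdm_single K hU
  choose! tgt htgt using aux_bdp_single K hU
  have hstep : ∀ a, K.dim a = 1 → lt (src a) (tgt a) := by
    intro a ha
    have h := hlf a 1 one_pos
    rw [Function.iterate_one, Function.iterate_one, hsrc a ha, htgt a ha] at h
    apply h
    · rw [Finsupp.support_single_ne_zero _ one_ne_zero]; exact Finset.mem_singleton_self _
    · rw [Finsupp.support_single_ne_zero _ one_ne_zero]; exact Finset.mem_singleton_self _
  obtain ⟨s, hs⟩ := aux_chain_single K hU (xm 0) (hx.nonneg_m 0) (hx.dim_m 0) hx.eps_m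
  obtain ⟨t, ht⟩ := aux_chain_single K hU (xp 0) (hx.nonneg_p 0) (hx.dim_p 0) hx.eps_p
  have hbda : K.bdc (xa 1) = xp 0 - xm 0 := by
    rcases hxa with rfl | rfl
    · exact hx.bd_m 0
    · exact hx.bd_p 0
  have hnn : ∀ b, 0 ≤ xa 1 b := by
    rcases hxa with rfl | rfl
    · exact hx.nonneg_m 1
    · exact hx.nonneg_p 1
  have hdima : ∀ b ∈ (xa 1).support, K.dim b = 1 := by
    rcases hxa with rfl | rfl
    · exact hx.dim_m 1
    · exact hx.dim_p 1
  set k := ((xa 1).sum fun _ n => n).toNat with hk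
  have hwnn : 0 ≤ ((xa 1).sum fun _ n => n) := by
    rw [Finsupp.sum]
    exact Finset.sum_nonneg fun b _ => hnn b
  have hwk : ((xa 1).sum fun _ n => n) = (k : ℤ) := (Int.toNat_of_nonneg hwnn).symm
  obtain ⟨a, v, hv0, hvk, hav, hadj, hdec⟩ :=
    aux_path K lt htr hirr src tgt hsrc htgt hstep k (xa 1) hnn hdima hwk s t
      (by rw [hbda, hs, ht])
  have hpair : ∀ j i, i < j → j ≤ k → lt (v i) (v j) := by
    intro j
    induction j with
    | zero => intro i h1 h2; omega
    | succ j ihj =>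
      intro i h1 h2
      by_cases hij : i = j
      · subst hij; exact hadj i (by omega)
      · exact htr _ _ _ (ihj i (by omega) (by omega)) (hadj j (by omega))
  have hvinj : ∀ i j, i ≤ k → j ≤ k → v i = v j → i = j := by
    intro i j hi hj hv
    rcases lt_trichotomy i j with h | h | h
    · exact absurd (hv ▸ hpair j i h hj) (hirr _)
    · exact h
    · exact absurd (hv ▸ hpair i j h hi) (hirr _)
  refine ⟨k, a, fun i h1 h2 => (hav i h1 h2).1, ?_, hdec, ?_, ?_, ?_, ?_, ?_⟩
  · intro i j hi1 hi2 hj1 hj2 hij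
    apply hvinj i j hi2 hj2
    rw [← (hav i hi1 hi2).2.2, ← (hav j hj1 hj2).2.2, hij]
  · intro i h1 h2
    exact ⟨⟨src (a i), hsrc _ (hav i h1 h2).1⟩, ⟨tgt (a i), htgt _ (hav i h1 h2).1⟩⟩
  · intro hk1
    have h := hav 1 (le_refl 1) hk1
    rw [hsrc _ h.1, h.2.1, Nat.sub_self, hv0, hs]
  · intro i h1 h2
    have hi := hav i h1 (by omega)
    have hi1 := hav (i+1) (by omega) h2
    rw [htgt _ hi.1, hsrc _ hi1.1, hi.2.2, hi1.2.1, Nat.add_sub_cancel]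
  · intro hk1
    have h := hav k hk1 (le_refl k)
    rw [htgt _ h.1, h.2.2, hvk, ht]
  · refine ⟨fun i => Finsupp.single (v i) 1, ?_, ?_, ?_, ?_⟩
    · show Finsupp.single (v 0) 1 = xm 0
      rw [hv0, hs]
    · intro i h1 h2
      have h := hav i h1 h2
      rw [htgt _ h.1, h.2.2]
    · intro i j hi hj he
      exact hvinj i j hi hj ((Finsupp.single_left_inj one_ne_zero).mp he)
    · rw [FADC.gch, hdec, aux_sum_sum]
      have hsame : (∑ i ∈ Finset.Icc 1 k, K.bdp (Finsupp.single (a i) 1))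
          = ∑ i ∈ Finset.Icc 1 k, Finsupp.single (v i) (1:ℤ) := by
        apply Finset.sum_congr rfl
        intro i hi
        obtain ⟨h1, h2⟩ := Finset.mem_Icc.mp hi
        have h := hav i h1 h2
        rw [htgt _ h.1, h.2.2]
      rw [hsame, hs, ← hv0]
      have hrange : Finset.range (k+1) = insert 0 (Finset.Icc 1 k) := by
        ext i
        simp only [Finset.mem_range, Finset.mem_insert, Finset.mem_Icc]
        omega
      rw [hrange, Finset.sum_insert (by simp)]
end

section
/- Let K be a loop-free unital free augmented directed complex, let x ∈ νK, let q ≥ 0 and let α be a sign. Then a basis element e lies in the support of x_{q+1}^− if and only if e lies in the support of g_{q+1}^α(x) and e does not lie in the support of ∂⁺a for any basis element a in the support of x_{q+2}^α; and e lies in the support of x_{q+1}^+ if and only if e lies in the support of g_{q+1}^α(x) and e does not lie in the support of ∂⁻a for any basis element a in the support of x_{q+2}^α. (In other words, the input edges of the network G_{q+1}^α(x) are exactly the terms of x_{q+1}^− and its output edges are exactly the terms of x_{q+1}^+.) -/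
open Finsupp

namespace Stmt12Aux

open Finsupp

variable {K : FADC}

/-- `∂⁺a` for a basis element. -/
noncomputable def P (K : FADC) (a : K.B) : K.B →₀ ℤ := K.bdp (Finsupp.single a 1)
/-- `∂⁻a` for a basis element. -/
noncomputable def M (K : FADC) (a : K.B) : K.B →₀ ℤ := K.bdm (Finsupp.single a 1)

lemma bdc_single (a : K.B) : K.bdc (Finsupp.single a 1) = K.bd a := by
  unfold FADC.bdc
  rw [Finsupp.sum_single_index (by simp), one_smul]

lemma P_apply (a : K.B) (e : K.B) : P K a e = max (K.bd a e) 0 := by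
  unfold P FADC.bdp
  rw [Finsupp.mapRange_apply, bdc_single]

lemma M_apply (a : K.B) (e : K.B) : M K a e = max (-(K.bd a e)) 0 := by
  unfold M FADC.bdm
  rw [Finsupp.mapRange_apply, Finsupp.neg_apply, bdc_single]

lemma P_nonneg (a e : K.B) : 0 ≤ P K a e := by rw [P_apply]; exact le_max_right _ _

lemma M_nonneg (a e : K.B) : 0 ≤ M K a e := by rw [M_apply]; exact le_max_right _ _

lemma P_sub_M (a : K.B) : P K a - M K a = K.bd a := by
  ext e
  rw [Finsupp.sub_apply, P_apply, M_apply]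
  omega

lemma P_M_disjoint (a e : K.B) : P K a e = 0 ∨ M K a e = 0 := by
  rw [P_apply, M_apply]; omega

lemma bdc_sub (c d : K.B →₀ ℤ) : K.bdc (c - d) = K.bdc c - K.bdc d :=
  Finsupp.sum_sub_index (fun a b₁ b₂ => sub_smul b₁ b₂ (K.bd a))

lemma bdc_add (c d : K.B →₀ ℤ) : K.bdc (c + d) = K.bdc c + K.bdc d :=
  Finsupp.sum_add_index' (by simp) (fun a b₁ b₂ => add_smul b₁ b₂ (K.bd a))

lemma epsc_sub (c d : K.B →₀ ℤ) : K.epsc (c - d) = K.epsc c - K.epsc d :=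
  Finsupp.sum_sub_index (fun a b₁ b₂ => sub_mul b₁ b₂ (K.eps a))

lemma epsc_add (c d : K.B →₀ ℤ) : K.epsc (c + d) = K.epsc c + K.epsc d :=
  Finsupp.sum_add_index' (by simp) (fun a b₁ b₂ => add_mul b₁ b₂ (K.eps a))

lemma bdc_zero : K.bdc 0 = 0 := Finsupp.sum_zero_index

lemma epsc_zero : K.epsc 0 = 0 := Finsupp.sum_zero_index

lemma bdp_zero : K.bdp 0 = 0 := by
  unfold FADC.bdp
  rw [bdc_zero]
  exact Finsupp.mapRange_zero

lemma bdm_zero : K.bdm 0 = 0 := by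
  unfold FADC.bdm
  rw [bdc_zero, neg_zero]
  exact Finsupp.mapRange_zero

/-- `Σ n_a ∂⁺a` over the terms of `c`. -/
noncomputable def Dp (K : FADC) (c : K.B →₀ ℤ) : K.B →₀ ℤ :=
  c.sum fun b n => n • K.bdp (Finsupp.single b 1)

/-- `Σ n_a ∂⁻a` over the terms of `c`. -/
noncomputable def Dm (K : FADC) (c : K.B →₀ ℤ) : K.B →₀ ℤ :=
  c.sum fun b n => n • K.bdm (Finsupp.single b 1)

lemma gch_eq (m c : K.B →₀ ℤ) : K.gch m c = m + Dp K c := rfl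

lemma Dp_apply (c : K.B →₀ ℤ) (e : K.B) :
    Dp K c e = ∑ a ∈ c.support, c a * P K a e := by
  unfold Dp
  rw [Finsupp.sum_apply]
  rfl

lemma Dm_apply (c : K.B →₀ ℤ) (e : K.B) :
    Dm K c e = ∑ a ∈ c.support, c a * M K a e := by
  unfold Dm
  rw [Finsupp.sum_apply]
  rfl

lemma Dp_sub_single (c : K.B →₀ ℤ) (a : K.B) :
    Dp K (c - Finsupp.single a 1) = Dp K c - P K a := by
  unfold Dp
  rw [Finsupp.sum_sub_index (fun x b₁ b₂ => sub_smul b₁ b₂ _),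
    Finsupp.sum_single_index (by simp), one_smul]
  rfl

lemma Dm_sub_single (c : K.B →₀ ℤ) (a : K.B) :
    Dm K (c - Finsupp.single a 1) = Dm K c - M K a := by
  unfold Dm
  rw [Finsupp.sum_sub_index (fun x b₁ b₂ => sub_smul b₁ b₂ _),
    Finsupp.sum_single_index (by simp), one_smul]
  rfl

lemma bdc_eq_Dp_sub_Dm (c : K.B →₀ ℤ) : K.bdc c = Dp K c - Dm K c := by
  unfold FADC.bdc Dp Dm
  rw [← Finsupp.sum_sub]
  apply Finsupp.sum_congr
  intro a _
  rw [← smul_sub]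
  show c a • K.bd a = c a • (P K a - M K a)
  rw [P_sub_M]

lemma Dp_nonneg {c : K.B →₀ ℤ} (hc : ∀ e, 0 ≤ c e) (e : K.B) : 0 ≤ Dp K c e := by
  rw [Dp_apply]
  exact Finset.sum_nonneg fun a _ => mul_nonneg (hc a) (P_nonneg a e)

lemma Dm_nonneg {c : K.B →₀ ℤ} (hc : ∀ e, 0 ≤ c e) (e : K.B) : 0 ≤ Dm K c e := by
  rw [Dm_apply]
  exact Finset.sum_nonneg fun a _ => mul_nonneg (hc a) (M_nonneg a e)

lemma le_Dp {c : K.B →₀ ℤ} (hc : ∀ e, 0 ≤ c e) (a e : K.B) :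
    c a * P K a e ≤ Dp K c e := by
  rw [Dp_apply]
  by_cases ha : a ∈ c.support
  · exact Finset.single_le_sum (fun i _ => mul_nonneg (hc i) (P_nonneg i e)) ha
  · rw [Finsupp.notMem_support_iff.mp ha, zero_mul]
    exact Finset.sum_nonneg fun i _ => mul_nonneg (hc i) (P_nonneg i e)

lemma le_Dm {c : K.B →₀ ℤ} (hc : ∀ e, 0 ≤ c e) (a e : K.B) :
    c a * M K a e ≤ Dm K c e := by
  rw [Dm_apply]
  by_cases ha : a ∈ c.support
  · exact Finset.single_le_sum (fun i _ => mul_nonneg (hc i) (M_nonneg i e)) ha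
  · rw [Finsupp.notMem_support_iff.mp ha, zero_mul]
    exact Finset.sum_nonneg fun i _ => mul_nonneg (hc i) (M_nonneg i e)

lemma Dp_eq_zero_iff {c : K.B →₀ ℤ} (hc : ∀ e, 0 ≤ c e) (e : K.B) :
    Dp K c e = 0 ↔ ∀ a, c a ≠ 0 → P K a e = 0 := by
  rw [Dp_apply, Finset.sum_eq_zero_iff_of_nonneg
    (fun a _ => mul_nonneg (hc a) (P_nonneg a e))]
  constructor
  · intro h a ha
    rcases mul_eq_zero.mp (h a (Finsupp.mem_support_iff.mpr ha)) with h' | h'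
    · exact absurd h' ha
    · exact h'
  · intro h a ha
    rw [h a (Finsupp.mem_support_iff.mp ha), mul_zero]

lemma Dm_eq_zero_iff {c : K.B →₀ ℤ} (hc : ∀ e, 0 ≤ c e) (e : K.B) :
    Dm K c e = 0 ↔ ∀ a, c a ≠ 0 → M K a e = 0 := by
  rw [Dm_apply, Finset.sum_eq_zero_iff_of_nonneg
    (fun a _ => mul_nonneg (hc a) (M_nonneg a e))]
  constructor
  · intro h a ha
    rcases mul_eq_zero.mp (h a (Finsupp.mem_support_iff.mpr ha)) with h' | h'
    · exact absurd h' ha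
    · exact h'
  · intro h a ha
    rw [h a (Finsupp.mem_support_iff.mp ha), mul_zero]

end Stmt12Aux
namespace Stmt12Aux

open Finsupp

variable {K : FADC}

lemma P_ne_zero (hU : K.Unital) (a : K.B) (ha : 0 < K.dim a) : ∃ e, P K a e ≠ 0 := by
  by_contra h
  push_neg at h
  have hP : P K a = 0 := Finsupp.ext h
  obtain ⟨k, hk⟩ : ∃ k, K.dim a = k + 1 := ⟨K.dim a - 1, by omega⟩
  have h2 := (hU a).2
  rw [hk, Function.iterate_succ_apply] at h2
  rw [show K.bdp (Finsupp.single a 1) = P K a from rfl, hP,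
    Function.iterate_fixed bdp_zero, epsc_zero] at h2
  exact one_ne_zero h2.symm

lemma M_ne_zero (hU : K.Unital) (a : K.B) (ha : 0 < K.dim a) : ∃ e, M K a e ≠ 0 := by
  by_contra h
  push_neg at h
  have hM : M K a = 0 := Finsupp.ext h
  obtain ⟨k, hk⟩ : ∃ k, K.dim a = k + 1 := ⟨K.dim a - 1, by omega⟩
  have h2 := (hU a).1
  rw [hk, Function.iterate_succ_apply] at h2
  rw [show K.bdm (Finsupp.single a 1) = M K a from rfl, hM,
    Function.iterate_fixed bdm_zero, epsc_zero] at h2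
  exact one_ne_zero h2.symm

/-- The relation `a ≺ a'` iff some basis element occurs in both `∂⁺a` and `∂⁻a'`. -/
def Rel (K : FADC) (a a' : K.B) : Prop := ∃ e, P K a e ≠ 0 ∧ M K a' e ≠ 0

section Order

variable {lt : K.B → K.B → Prop} (hso : IsStrictOrder K.B lt)
  (hord1 : ∀ a b b', M K a b ≠ 0 → P K a b' ≠ 0 → lt b b')

include hso hord1

lemma transgen_rel {a a' : K.B} (h : Relation.TransGen (Rel K) a a') :
    ∃ e e', P K a e ≠ 0 ∧ M K a' e' ≠ 0 ∧ (lt e e' ∨ e = e') := by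
  induction h with
  | single h =>
    obtain ⟨e, he1, he2⟩ := h
    exact ⟨e, e, he1, he2, Or.inr rfl⟩
  | tail _ hR ih =>
    obtain ⟨e, e', he1, he2, he3⟩ := ih
    obtain ⟨f, hf1, hf2⟩ := hR
    have hlt : lt e' f := hord1 _ _ _ he2 hf1
    refine ⟨e, f, he1, hf2, Or.inl ?_⟩
    rcases he3 with h' | h'
    · exact hso.2.1 e e' f h' hlt
    · exact h' ▸ hlt

lemma not_transgen_self (a : K.B) : ¬ Relation.TransGen (Rel K) a a := by
  intro h
  obtain ⟨e, e', he1, he2, he3⟩ := transgen_rel hso hord1 h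
  have hlt : lt e' e := hord1 _ _ _ he2 he1
  rcases he3 with h' | h'
  · exact hso.1.1 e (hso.2.1 e e' e h' hlt)
  · exact hso.1.1 e (h' ▸ hlt)

lemma not_transgen_self' (a : K.B) :
    ¬ Relation.TransGen (fun x y => Rel K y x) a a := by
  intro h
  exact not_transgen_self hso hord1 a (Relation.transGen_swap.mp h)

end Order

lemma exists_rel_max {α : Type*} (R : α → α → Prop)
    (hirr : ∀ a, ¬ Relation.TransGen R a a) (S : Finset α) (hS : S.Nonempty) :
    ∃ a₀ ∈ S, ∀ a ∈ S, ¬ R a₀ a := by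
  classical
  induction S using Finset.strongInduction with
  | _ S ih =>
    obtain ⟨a, ha⟩ := hS
    by_cases hT : (S.filter fun b => Relation.TransGen R a b).Nonempty
    · have hss : (S.filter fun b => Relation.TransGen R a b) ⊂ S :=
        Finset.filter_ssubset.mpr ⟨a, ha, hirr a⟩
      obtain ⟨a₀, ha₀, hmax⟩ := ih _ hss hT
      rw [Finset.mem_filter] at ha₀
      refine ⟨a₀, ha₀.1, fun b hb hRb => ?_⟩
      exact hmax b (Finset.mem_filter.mpr ⟨hb, ha₀.2.tail hRb⟩) hRb
    · refine ⟨a, ha, fun b hb hRb => ?_⟩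
      exact hT ⟨b, Finset.mem_filter.mpr ⟨hb, Relation.TransGen.single hRb⟩⟩

end Stmt12Aux
namespace Stmt12Aux

open Finsupp

variable {K : FADC}

lemma epsc_bd (a : K.B) : K.epsc (K.bd a) = 0 := K.eps_bd a

lemma bdc_bd (a : K.B) : K.bdc (K.bd a) = 0 := K.bd_bd a

/-- A valid pair `(x_n^-, x_n^+)` for a tower of length `n`. -/
def Good (K : FADC) : ℕ → (K.B →₀ ℤ) → (K.B →₀ ℤ) → Prop
  | 0, m, p => (∀ e, 0 ≤ m e) ∧ (∀ e, 0 ≤ p e) ∧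
      (∀ b, m b ≠ 0 → K.dim b = 0) ∧ (∀ b, p b ≠ 0 → K.dim b = 0) ∧
      K.epsc m = 1 ∧ K.epsc p = 1
  | (n+1), m, p => (∀ e, 0 ≤ m e) ∧ (∀ e, 0 ≤ p e) ∧
      (∀ b, m b ≠ 0 → K.dim b = n+1) ∧ (∀ b, p b ≠ 0 → K.dim b = n+1) ∧
      ∃ m' p', Good K n m' p' ∧ K.bdc m = p' - m' ∧ K.bdc p = p' - m'

lemma Good.nonneg_m {n : ℕ} {m p : K.B →₀ ℤ} (h : Good K n m p) : ∀ e, 0 ≤ m e := by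
  cases n <;> exact h.1

lemma Good.nonneg_p {n : ℕ} {m p : K.B →₀ ℤ} (h : Good K n m p) : ∀ e, 0 ≤ p e := by
  cases n <;> exact h.2.1

lemma Good.dim_m {n : ℕ} {m p : K.B →₀ ℤ} (h : Good K n m p) :
    ∀ b, m b ≠ 0 → K.dim b = n := by
  cases n <;> exact h.2.2.1

lemma Good.dim_p {n : ℕ} {m p : K.B →₀ ℤ} (h : Good K n m p) :
    ∀ b, p b ≠ 0 → K.dim b = n := by
  cases n <;> exact h.2.2.2.1

lemma Good.update_p {n : ℕ} {m p : K.B →₀ ℤ} (h : Good K n m p) (a₀ : K.B)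
    (hdim : K.dim a₀ = n + 1) (hpos : ∀ e, 0 ≤ p e - K.bd a₀ e) :
    Good K n m (p - K.bd a₀) := by
  have hpos' : ∀ e, 0 ≤ (p - K.bd a₀) e := by
    intro e; rw [Finsupp.sub_apply]; exact hpos e
  have hdimb : ∀ b, (p - K.bd a₀) b ≠ 0 → K.dim b = n := by
    intro b hb
    rw [Finsupp.sub_apply] at hb
    by_cases hp : p b = 0
    · have hbd : K.bd a₀ b ≠ 0 := by intro h'; rw [hp, h'] at hb; exact hb (by ring)
      have := K.bd_dim a₀ b (Finsupp.mem_support_iff.mpr hbd)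
      omega
    · exact h.dim_p b hp
  cases n with
  | zero =>
    obtain ⟨h1, h2, h3, h4, h5, h6⟩ := h
    exact ⟨h1, hpos', h3, hdimb, h5, by rw [epsc_sub, h6, epsc_bd, sub_zero]⟩
  | succ k =>
    obtain ⟨h1, h2, h3, h4, m', p', hg, hbm, hbp⟩ := h
    exact ⟨h1, hpos', h3, hdimb, m', p', hg, hbm,
      by rw [bdc_sub, hbp, bdc_bd, sub_zero]⟩

lemma Good.update_m {n : ℕ} {m p : K.B →₀ ℤ} (h : Good K n m p) (a₁ : K.B)
    (hdim : K.dim a₁ = n + 1) (hpos : ∀ e, 0 ≤ m e + K.bd a₁ e) :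
    Good K n (m + K.bd a₁) p := by
  have hpos' : ∀ e, 0 ≤ (m + K.bd a₁) e := by
    intro e; rw [Finsupp.add_apply]; exact hpos e
  have hdimb : ∀ b, (m + K.bd a₁) b ≠ 0 → K.dim b = n := by
    intro b hb
    rw [Finsupp.add_apply] at hb
    by_cases hm : m b = 0
    · have hbd : K.bd a₁ b ≠ 0 := by intro h'; rw [hm, h'] at hb; exact hb (by ring)
      have := K.bd_dim a₁ b (Finsupp.mem_support_iff.mpr hbd)
      omega
    · exact h.dim_m b hm
  cases n with
  | zero =>
    obtain ⟨h1, h2, h3, h4, h5, h6⟩ := h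
    exact ⟨hpos', h2, hdimb, h4, by rw [epsc_add, h5, epsc_bd, add_zero], h6⟩
  | succ k =>
    obtain ⟨h1, h2, h3, h4, m', p', hg, hbm, hbp⟩ := h
    exact ⟨hpos', h2, hdimb, h4, m', p', hg,
      by rw [bdc_add, hbm, bdc_bd, add_zero], hbp⟩

lemma coeff_le_one_of_eps (hU : K.Unital) {u : K.B →₀ ℤ} (h0 : ∀ e, 0 ≤ u e)
    (hd : ∀ b, u b ≠ 0 → K.dim b = 0) (he : K.epsc u = 1) : ∀ e, u e ≤ 1 := by
  have heps1 : ∀ b ∈ u.support, K.eps b = 1 := by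
    intro b hb
    have hdb := hd b (Finsupp.mem_support_iff.mp hb)
    have h1 := (hU b).1
    rw [hdb, Function.iterate_zero_apply] at h1
    rwa [show K.epsc (Finsupp.single b 1) = K.eps b by
      unfold FADC.epsc
      rw [Finsupp.sum_single_index (by simp), one_mul]] at h1
  have hsum : K.epsc u = ∑ b ∈ u.support, u b * K.eps b := rfl
  intro e
  by_cases heu : e ∈ u.support
  · have hle : u e * K.eps e ≤ ∑ b ∈ u.support, u b * K.eps b :=
      Finset.single_le_sum (f := fun b => u b * K.eps b)
        (fun b hb => by rw [heps1 b hb, mul_one]; exact h0 b) heu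
    rw [heps1 e heu, mul_one] at hle
    rw [← hsum, he] at hle
    exact hle
  · rw [Finsupp.notMem_support_iff.mp heu]
    exact zero_le_one

end Stmt12Aux
namespace Stmt12Aux

open Finsupp

variable {K : FADC}

lemma coreA {lt : K.B → K.B → Prop} (hU : K.Unital) (hso : IsStrictOrder K.B lt)
    (hord1 : ∀ a b b', M K a b ≠ 0 → P K a b' ≠ 0 → lt b b') (n : ℕ)
    (hbd : ∀ m p : K.B →₀ ℤ, Good K n m p → (∀ e, m e ≤ 1) ∧ (∀ e, p e ≤ 1)) :
    ∀ (N : ℕ) (m p c : K.B →₀ ℤ), c.support.card ≤ N → Good K n m p →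
      (∀ e, 0 ≤ c e) → (∀ a, c a ≠ 0 → K.dim a = n + 1) → K.bdc c = p - m →
      (∀ a, c a ≠ 0 → ∀ e, P K a e ≠ 0 → m e = 0) ∧ (∀ a, c a ≤ 1) := by
  classical
  intro N
  induction N with
  | zero =>
    intro m p c hcard _ _ _ _
    have h0 : c = 0 :=
      Finsupp.support_eq_empty.mp (Finset.card_eq_zero.mp (Nat.le_zero.mp hcard))
    subst h0
    exact ⟨fun a ha => absurd rfl ha, fun a => by simp⟩
  | succ N ih =>
    intro m p c hcard hg hc0 hcd hbdc
    by_cases hcz : c = 0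
    · subst hcz
      exact ⟨fun a ha => absurd rfl ha, fun a => by simp⟩
    have hsupp : c.support.Nonempty := Finsupp.support_nonempty_iff.mpr hcz
    obtain ⟨a₀, ha₀S, hmax⟩ :=
      exists_rel_max (Rel K) (not_transgen_self hso hord1) c.support hsupp
    have ha₀ : c a₀ ≠ 0 := Finsupp.mem_support_iff.mp ha₀S
    have ha₀pos : 0 < c a₀ := lt_of_le_of_ne (hc0 a₀) (Ne.symm ha₀)
    have hdima₀ : K.dim a₀ = n + 1 := hcd a₀ ha₀
    have hmaster : ∀ e, m e + Dp K c e = p e + Dm K c e := by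
      intro e
      have h1 : K.bdc c e = (p - m) e := by rw [hbdc]
      rw [bdc_eq_Dp_sub_Dm, Finsupp.sub_apply, Finsupp.sub_apply] at h1
      omega
    have hDm0 : ∀ e, P K a₀ e ≠ 0 → Dm K c e = 0 := by
      intro e hPe
      rw [Dm_eq_zero_iff hc0]
      intro a ha
      by_contra hM
      exact hmax a (Finsupp.mem_support_iff.mpr ha) ⟨e, hPe, hM⟩
    have hp1 := (hbd m p hg).2
    have hkey : ∀ e, P K a₀ e ≠ 0 → m e = 0 ∧ c a₀ ≤ 1 := by
      intro e hPe
      have h1 := hmaster e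
      rw [hDm0 e hPe] at h1
      have h2 := le_Dp hc0 a₀ e
      have h3 : 1 ≤ P K a₀ e := by have := P_nonneg a₀ e; omega
      have h4 := hp1 e
      have h5 := hg.nonneg_m e
      have h6 : c a₀ ≤ c a₀ * P K a₀ e :=
        le_mul_of_one_le_right (le_of_lt ha₀pos) h3
      omega
    obtain ⟨e₀, hPe₀⟩ := P_ne_zero hU a₀ (by omega)
    have hca₀1 : c a₀ = 1 := le_antisymm (hkey e₀ hPe₀).2 ha₀pos
    -- peel off a₀
    set c' := c - Finsupp.single a₀ 1 with hc'def
    set p' := p - K.bd a₀ with hp'def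
    have hc'app : ∀ a, c' a = c a - (if a₀ = a then 1 else 0) := by
      intro a; rw [hc'def, Finsupp.sub_apply, Finsupp.single_apply]
    have hc'a₀ : c' a₀ = 0 := by rw [hc'app]; simp [hca₀1]
    have hc'eq : ∀ a, a ≠ a₀ → c' a = c a := by
      intro a ha; rw [hc'app, if_neg (Ne.symm ha), sub_zero]
    have hc'0 : ∀ e, 0 ≤ c' e := by
      intro e
      rcases eq_or_ne e a₀ with rfl | hne
      · rw [hc'a₀]
      · rw [hc'eq e hne]; exact hc0 e
    have hc'd : ∀ a, c' a ≠ 0 → K.dim a = n + 1 := by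
      intro a ha
      rcases eq_or_ne a a₀ with rfl | hne
      · exact absurd hc'a₀ ha
      · exact hcd a (by rwa [hc'eq a hne] at ha)
    have hcard' : c'.support.card ≤ N := by
      have hsub : c'.support ⊆ c.support.erase a₀ := by
        intro a ha
        have ha' := Finsupp.mem_support_iff.mp ha
        have hne : a ≠ a₀ := by intro h'; exact ha' (h' ▸ hc'a₀)
        exact Finset.mem_erase.mpr
          ⟨hne, Finsupp.mem_support_iff.mpr (by rwa [hc'eq a hne] at ha')⟩
      have := Finset.card_le_card hsub
      rw [Finset.card_erase_of_mem ha₀S] at this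
      omega
    have hp'pos : ∀ e, 0 ≤ p e - K.bd a₀ e := by
      intro e
      have hbde : K.bd a₀ e = P K a₀ e - M K a₀ e := by
        rw [← P_sub_M, Finsupp.sub_apply]
      by_cases hPe : P K a₀ e = 0
      · have := M_nonneg a₀ e
        have := hg.nonneg_p e
        omega
      · have hMe : M K a₀ e = 0 := (P_M_disjoint a₀ e).resolve_left hPe
        have h1 := hmaster e
        rw [hDm0 e hPe] at h1
        have h2 := le_Dp hc0 a₀ e
        rw [hca₀1, one_mul] at h2
        have := hg.nonneg_m e
        omega
    have hg' : Good K n m p' := hg.update_p a₀ hdima₀ hp'pos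
    have hbdc' : K.bdc c' = p' - m := by
      rw [hc'def, hp'def, bdc_sub, bdc_single, hbdc]
      abel
    obtain ⟨ihA, ihB⟩ := ih m p' c' hcard' hg' hc'0 hc'd hbdc'
    constructor
    · intro a ha e hPe
      rcases eq_or_ne a a₀ with rfl | hne
      · exact (hkey e hPe).1
      · exact ihA a (by rwa [hc'eq a hne]) e hPe
    · intro a
      rcases eq_or_ne a a₀ with rfl | hne
      · omega
      · have := ihB a
        rwa [hc'eq a hne] at this

lemma coreB {lt : K.B → K.B → Prop} (hU : K.Unital) (hso : IsStrictOrder K.B lt)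
    (hord1 : ∀ a b b', M K a b ≠ 0 → P K a b' ≠ 0 → lt b b') (n : ℕ)
    (hbd : ∀ m p : K.B →₀ ℤ, Good K n m p → (∀ e, m e ≤ 1) ∧ (∀ e, p e ≤ 1)) :
    ∀ (N : ℕ) (m p c : K.B →₀ ℤ), c.support.card ≤ N → Good K n m p →
      (∀ e, 0 ≤ c e) → (∀ a, c a ≠ 0 → K.dim a = n + 1) → K.bdc c = p - m →
      (∀ a, c a ≠ 0 → ∀ e, M K a e ≠ 0 → p e = 0) := by
  classical
  intro N
  induction N with
  | zero =>
    intro m p c hcard _ _ _ _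
    have h0 : c = 0 :=
      Finsupp.support_eq_empty.mp (Finset.card_eq_zero.mp (Nat.le_zero.mp hcard))
    subst h0
    exact fun a ha => absurd rfl ha
  | succ N ih =>
    intro m p c hcard hg hc0 hcd hbdc
    by_cases hcz : c = 0
    · subst hcz
      exact fun a ha => absurd rfl ha
    have hsupp : c.support.Nonempty := Finsupp.support_nonempty_iff.mpr hcz
    obtain ⟨a₁, ha₁S, hmin⟩ :=
      exists_rel_max (fun x y => Rel K y x) (not_transgen_self' hso hord1)
        c.support hsupp
    have ha₁ : c a₁ ≠ 0 := Finsupp.mem_support_iff.mp ha₁S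
    have ha₁pos : 0 < c a₁ := lt_of_le_of_ne (hc0 a₁) (Ne.symm ha₁)
    have hdima₁ : K.dim a₁ = n + 1 := hcd a₁ ha₁
    have hmaster : ∀ e, m e + Dp K c e = p e + Dm K c e := by
      intro e
      have h1 : K.bdc c e = (p - m) e := by rw [hbdc]
      rw [bdc_eq_Dp_sub_Dm, Finsupp.sub_apply, Finsupp.sub_apply] at h1
      omega
    have hDp0 : ∀ e, M K a₁ e ≠ 0 → Dp K c e = 0 := by
      intro e hMe
      rw [Dp_eq_zero_iff hc0]
      intro a ha
      by_contra hP
      exact hmin a (Finsupp.mem_support_iff.mpr ha) ⟨e, hP, hMe⟩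
    have hm1 := (hbd m p hg).1
    have hkey : ∀ e, M K a₁ e ≠ 0 → p e = 0 ∧ c a₁ ≤ 1 := by
      intro e hMe
      have h1 := hmaster e
      rw [hDp0 e hMe] at h1
      have h2 := le_Dm hc0 a₁ e
      have h3 : 1 ≤ M K a₁ e := by have := M_nonneg a₁ e; omega
      have h4 := hm1 e
      have h5 := hg.nonneg_p e
      have h6 : c a₁ ≤ c a₁ * M K a₁ e :=
        le_mul_of_one_le_right (le_of_lt ha₁pos) h3
      omega
    obtain ⟨e₁, hMe₁⟩ := M_ne_zero hU a₁ (by omega)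
    have hca₁1 : c a₁ = 1 := le_antisymm (hkey e₁ hMe₁).2 ha₁pos
    -- peel off a₁
    set c' := c - Finsupp.single a₁ 1 with hc'def
    set m' := m + K.bd a₁ with hm'def
    have hc'app : ∀ a, c' a = c a - (if a₁ = a then 1 else 0) := by
      intro a; rw [hc'def, Finsupp.sub_apply, Finsupp.single_apply]
    have hc'a₁ : c' a₁ = 0 := by rw [hc'app]; simp [hca₁1]
    have hc'eq : ∀ a, a ≠ a₁ → c' a = c a := by
      intro a ha; rw [hc'app, if_neg (Ne.symm ha), sub_zero]
    have hc'0 : ∀ e, 0 ≤ c' e := by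
      intro e
      rcases eq_or_ne e a₁ with rfl | hne
      · rw [hc'a₁]
      · rw [hc'eq e hne]; exact hc0 e
    have hc'd : ∀ a, c' a ≠ 0 → K.dim a = n + 1 := by
      intro a ha
      rcases eq_or_ne a a₁ with rfl | hne
      · exact absurd hc'a₁ ha
      · exact hcd a (by rwa [hc'eq a hne] at ha)
    have hcard' : c'.support.card ≤ N := by
      have hsub : c'.support ⊆ c.support.erase a₁ := by
        intro a ha
        have ha' := Finsupp.mem_support_iff.mp ha
        have hne : a ≠ a₁ := by intro h'; exact ha' (h' ▸ hc'a₁)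
        exact Finset.mem_erase.mpr
          ⟨hne, Finsupp.mem_support_iff.mpr (by rwa [hc'eq a hne] at ha')⟩
      have := Finset.card_le_card hsub
      rw [Finset.card_erase_of_mem ha₁S] at this
      omega
    have hm'pos : ∀ e, 0 ≤ m e + K.bd a₁ e := by
      intro e
      have hbde : K.bd a₁ e = P K a₁ e - M K a₁ e := by
        rw [← P_sub_M, Finsupp.sub_apply]
      by_cases hMe : M K a₁ e = 0
      · have := P_nonneg a₁ e
        have := hg.nonneg_m e
        omega
      · have hPe : P K a₁ e = 0 := (P_M_disjoint a₁ e).resolve_right hMe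
        have h1 := hmaster e
        rw [hDp0 e hMe] at h1
        have h2 := le_Dm hc0 a₁ e
        rw [hca₁1, one_mul] at h2
        have := hg.nonneg_p e
        omega
    have hg' : Good K n m' p := hg.update_m a₁ hdima₁ hm'pos
    have hbdc' : K.bdc c' = p - m' := by
      rw [hc'def, hm'def, bdc_sub, bdc_single, hbdc]
      abel
    have ihB := ih m' p c' hcard' hg' hc'0 hc'd hbdc'
    intro a ha e hMe
    rcases eq_or_ne a a₁ with rfl | hne
    · exact (hkey e hMe).1
    · exact ihB a (by rwa [hc'eq a hne]) e hMe

lemma main (hLF : K.LoopFree) (hU : K.Unital) :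
    ∀ (n : ℕ) (m p c : K.B →₀ ℤ), Good K n m p → (∀ e, 0 ≤ c e) →
      (∀ a, c a ≠ 0 → K.dim a = n + 1) → K.bdc c = p - m →
      (∀ a, c a ≠ 0 → ∀ e, P K a e ≠ 0 → m e = 0) ∧
      (∀ a, c a ≠ 0 → ∀ e, M K a e ≠ 0 → p e = 0) ∧
      (∀ a, c a ≤ 1) := by
  obtain ⟨lt, hso, hord⟩ := hLF
  have hord1 : ∀ a b b', M K a b ≠ 0 → P K a b' ≠ 0 → lt b b' := by
    intro a b b' hM hP
    refine hord a 1 one_pos b ?_ b' ?_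
    · rw [Function.iterate_one]; exact Finsupp.mem_support_iff.mpr hM
    · rw [Function.iterate_one]; exact Finsupp.mem_support_iff.mpr hP
  intro n
  induction n with
  | zero =>
    intro m p c hg hc0 hcd hbdc
    have hbd : ∀ m p : K.B →₀ ℤ, Good K 0 m p →
        (∀ e, m e ≤ 1) ∧ (∀ e, p e ≤ 1) := by
      intro m p hg
      obtain ⟨h1, h2, h3, h4, h5, h6⟩ := hg
      exact ⟨coeff_le_one_of_eps hU h1 h3 h5, coeff_le_one_of_eps hU h2 h4 h6⟩
    exact ⟨(coreA hU hso hord1 0 hbd _ m p c le_rfl hg hc0 hcd hbdc).1,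
      coreB hU hso hord1 0 hbd _ m p c le_rfl hg hc0 hcd hbdc,
      (coreA hU hso hord1 0 hbd _ m p c le_rfl hg hc0 hcd hbdc).2⟩
  | succ k ihk =>
    intro m p c hg hc0 hcd hbdc
    have hbd : ∀ m p : K.B →₀ ℤ, Good K (k+1) m p →
        (∀ e, m e ≤ 1) ∧ (∀ e, p e ≤ 1) := by
      intro m p hgm
      obtain ⟨h1, h2, h3, h4, m', p', hg', hbm, hbp⟩ := hgm
      exact ⟨(ihk m' p' m hg' h1 h3 hbm).2.2, (ihk m' p' p hg' h2 h4 hbp).2.2⟩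
    exact ⟨(coreA hU hso hord1 (k+1) hbd _ m p c le_rfl hg hc0 hcd hbdc).1,
      coreB hU hso hord1 (k+1) hbd _ m p c le_rfl hg hc0 hcd hbdc,
      (coreA hU hso hord1 (k+1) hbd _ m p c le_rfl hg hc0 hcd hbdc).2⟩

lemma good_of_nuMem {xm xp : ℕ → (K.B →₀ ℤ)} (hx : NuMem K xm xp) :
    ∀ j, Good K j (xm j) (xp j) := by
  intro j
  induction j with
  | zero =>
    exact ⟨hx.nonneg_m 0, hx.nonneg_p 0,
      fun b hb => hx.dim_m 0 b (Finsupp.mem_support_iff.mpr hb),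
      fun b hb => hx.dim_p 0 b (Finsupp.mem_support_iff.mpr hb),
      hx.eps_m, hx.eps_p⟩
  | succ k ihk =>
    exact ⟨hx.nonneg_m (k+1), hx.nonneg_p (k+1),
      fun b hb => hx.dim_m (k+1) b (Finsupp.mem_support_iff.mpr hb),
      fun b hb => hx.dim_p (k+1) b (Finsupp.mem_support_iff.mpr hb),
      xm k, xp k, ihk, hx.bd_m k, hx.bd_p k⟩

end Stmt12Aux

/-- The input edges of `G_{q+1}^α(x)` are exactly the terms of `x_{q+1}^-`, and its
output edges are exactly the terms of `x_{q+1}^+`. -/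
theorem stmt12 (K : FADC) (hLF : K.LoopFree) (hU : K.Unital)
    (xm xp : ℕ → (K.B →₀ ℤ)) (hx : NuMem K xm xp) (q : ℕ)
    (xa : ℕ → K.B →₀ ℤ) (hxa : xa = xm ∨ xa = xp) :
    ∀ e : K.B,
      (e ∈ (xm (q + 1)).support ↔
        e ∈ (K.gch (xm (q + 1)) (xa (q + 2))).support ∧
        ¬ ∃ a ∈ (xa (q + 2)).support, e ∈ (K.bdp (Finsupp.single a 1)).support) ∧
      (e ∈ (xp (q + 1)).support ↔
        e ∈ (K.gch (xm (q + 1)) (xa (q + 2))).support ∧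
        ¬ ∃ a ∈ (xa (q + 2)).support, e ∈ (K.bdm (Finsupp.single a 1)).support) := by
  have hc0 : ∀ b, 0 ≤ xa (q + 2) b := by
    rcases hxa with rfl | rfl
    exacts [hx.nonneg_m (q + 2), hx.nonneg_p (q + 2)]
  have hcd : ∀ a, xa (q + 2) a ≠ 0 → K.dim a = (q + 1) + 1 := by
    rcases hxa with rfl | rfl
    exacts [fun a ha => hx.dim_m (q + 2) a (Finsupp.mem_support_iff.mpr ha),
      fun a ha => hx.dim_p (q + 2) a (Finsupp.mem_support_iff.mpr ha)]
  have hbdc : K.bdc (xa (q + 2)) = xp (q + 1) - xm (q + 1) := by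
    rcases hxa with rfl | rfl
    exacts [hx.bd_m (q + 1), hx.bd_p (q + 1)]
  obtain ⟨hA, hB, -⟩ := Stmt12Aux.main hLF hU (q + 1) (xm (q + 1)) (xp (q + 1))
    (xa (q + 2)) (Stmt12Aux.good_of_nuMem hx (q + 1)) hc0 hcd hbdc
  have hmaster : ∀ e, xm (q + 1) e + Stmt12Aux.Dp K (xa (q + 2)) e
      = xp (q + 1) e + Stmt12Aux.Dm K (xa (q + 2)) e := by
    intro e
    have h1 : K.bdc (xa (q + 2)) e = (xp (q + 1) - xm (q + 1)) e := by rw [hbdc]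
    rw [Stmt12Aux.bdc_eq_Dp_sub_Dm, Finsupp.sub_apply, Finsupp.sub_apply] at h1
    omega
  intro e
  have hgch : (K.gch (xm (q + 1)) (xa (q + 2))) e
      = xm (q + 1) e + Stmt12Aux.Dp K (xa (q + 2)) e := by
    rw [Stmt12Aux.gch_eq, Finsupp.add_apply]
  simp only [Finsupp.mem_support_iff]
  constructor
  · constructor
    · intro hme
      have hDp : Stmt12Aux.Dp K (xa (q + 2)) e = 0 :=
        (Stmt12Aux.Dp_eq_zero_iff hc0 e).mpr (fun a ha => by
          by_contra hPa; exact hme (hA a ha e hPa))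
      refine ⟨?_, ?_⟩
      · rw [hgch, hDp, add_zero]; exact hme
      · rintro ⟨a, haS, hPa⟩
        exact hme (hA a haS e hPa)
    · rintro ⟨hg, hno⟩
      have hDp : Stmt12Aux.Dp K (xa (q + 2)) e = 0 :=
        (Stmt12Aux.Dp_eq_zero_iff hc0 e).mpr (fun a ha => by
          by_contra hPa; exact hno ⟨a, ha, hPa⟩)
      rw [hgch, hDp, add_zero] at hg
      exact hg
  · constructor
    · intro hpe
      have hDm : Stmt12Aux.Dm K (xa (q + 2)) e = 0 :=
        (Stmt12Aux.Dm_eq_zero_iff hc0 e).mpr (fun a ha => by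
          by_contra hMa; exact hpe (hB a ha e hMa))
      have h := hmaster e
      rw [hDm, add_zero] at h
      refine ⟨?_, ?_⟩
      · rw [hgch, h]; exact hpe
      · rintro ⟨a, haS, hMa⟩
        exact hpe (hB a haS e hMa)
    · rintro ⟨hg, hno⟩
      have hDm : Stmt12Aux.Dm K (xa (q + 2)) e = 0 :=
        (Stmt12Aux.Dm_eq_zero_iff hc0 e).mpr (fun a ha => by
          by_contra hMa; exact hno ⟨a, ha, hMa⟩)
      have h := hmaster e
      rw [hDm, add_zero] at h
      rw [hgch, h] at hg
      exact hg
end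

section
/- Every network N_q appearing in an n-dimensional opetopic sequence N_0 → N_1 → … → N_n is confluent. -/
open Finsupp

/-- If `c` is a constellation and there is a path from `c u` to `c v`, then `u = v`,
since `c v` is an input edge. -/
lemma constell_path_eq {N P : OpetopicNetwork} {c : N.V → P.E}
    (h : IsConstellation N P c) {u v : N.V}
    (hp : P.toNetwork.PathTo (c u) (c v)) : u = v := by
  rcases Relation.ReflTransGen.cases_tail hp with heq | ⟨b, _, hstep⟩
  · exact h.2.1 heq.symm
  · obtain ⟨x, _, hsx⟩ := hstep
    rw [h.1 v] at hsx
    exact absurd hsx.symm (Option.some_ne_none x)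

/-- If `c : N.V → P.E` is a constellation, every vertex of `N` is the source of
exactly one edge. -/
lemma constell_src_unique {N P : OpetopicNetwork} {c : N.V → P.E}
    (h : IsConstellation N P c) (v : N.V) :
    ∃! e : N.E, N.src e = some v := by
  obtain ⟨e', ⟨⟨u, hu, hp⟩, _⟩, huniq⟩ := h.2.2.2.2 (c v)
  have hue : u = v := constell_path_eq h hp
  subst hue
  refine ⟨e', hu, ?_⟩
  intro e'' h''
  apply huniq
  refine ⟨⟨u, h'', Relation.ReflTransGen.refl⟩, ?_⟩
  rintro ⟨w, hw, hpw⟩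
  have hwu : w = u := constell_path_eq h hpw
  subst hwu
  exact N.acyclic e'' (Relation.TransGen.single ⟨w, hw, h''⟩)

/-- If `c : N.V → P.E` is a constellation, every vertex of `P` which is the source
of some edge is also the target of some edge. -/
lemma constell_tgt_exists {N P : OpetopicNetwork} {c : N.V → P.E}
    (h : IsConstellation N P c) {w : P.V} {e : P.E} (he : P.src e = some w) :
    ∃ e₂ : P.E, P.tgt e₂ = some w := by
  by_contra hno
  push_neg at hno
  obtain ⟨e', ⟨⟨u, _, hp⟩, _⟩, _⟩ := h.2.2.2.2 e
  rcases Relation.ReflTransGen.cases_tail hp with heq | ⟨b, _, hstep⟩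
  · have := h.1 u
    rw [← heq, he] at this
    exact absurd this (Option.some_ne_none w)
  · obtain ⟨x, htx, hsx⟩ := hstep
    rw [he] at hsx
    have hxw : x = w := Option.some.inj hsx.symm
    exact hno b (hxw ▸ htx)

/-- Proposition 3.9: every network in an opetopic sequence is confluent. -/
theorem stmt13 (n : ℕ) (S : OpetopicSequence n) (q : Fin (n + 1)) :
    (S.N q).toNetwork.Confluent := by
  have key : ∀ v : (S.N q).V, ∃! e, (S.N q).src e = some v := by
    intro v
    by_cases hq : q = Fin.last n
    · subst hq
      exact (S.top_noV.false v).elim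
    · obtain ⟨p, rfl⟩ := Fin.exists_castSucc_eq.2 hq
      exact constell_src_unique (S.constell p) v
  refine ⟨(S.N q).acyclic, (S.N q).out_unique, key, ?_⟩
  intro w
  rcases Fin.eq_zero_or_eq_succ q with rfl | ⟨p, rfl⟩
  · obtain ⟨-, k, e, vq, -, -, hstep⟩ := S.linear0
    exact ⟨e (vq.symm w).castSucc, by rw [(hstep (vq.symm w)).1, vq.apply_symm_apply]⟩
  · obtain ⟨e, he, -⟩ := key w
    exact constell_tgt_exists (S.constell p) he
end
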